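/- In the Golub–Kahan bidiagonalization setup, for every k with 1 ≤ k ≤ n−1, the singular values θ_1^{(k)} > θ_2^{(k)} > ⋯ > θ_k^{(k)} of B_k strictly interlace the singular values of A: for every i with 1 ≤ i ≤ k one has σ_{n−k+i} < θ_i^{(k)} < σ_i. -/

import Mathlib

open Matrix
open scoped RealInnerProductSpace

/-- Spectral norm (largest singular value) of a real matrix. -/
noncomputable def specNorm {a b : ℕ} (M : Matrix (Fin a) (Fin b) ℝ) : ℝ :=
  ‖LinearMap.toContinuousLinearMap (Matrix.toEuclideanLin M)‖

/-- The `j`-th largest singular value of a real matrix (`j ≥ 1`), characterized via the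
Eckart–Young theorem as the minimal spectral-norm distance to matrices of rank `< j`;
it is `0` when `j` exceeds the smaller dimension. -/
noncomputable def singVal {a b : ℕ} (M : Matrix (Fin a) (Fin b) ℝ) (j : ℕ) : ℝ :=
  sInf {r : ℝ | ∃ D : Matrix (Fin a) (Fin b) ℝ, D.rank < j ∧ r = specNorm (M - D)}

/-- The matrix of the first `k` columns of `M`. -/
def colSub {a b : ℕ} (M : Matrix (Fin a) (Fin b) ℝ) (k : ℕ) (hk : k ≤ b) :
    Matrix (Fin a) (Fin k) ℝ :=
  M.submatrix id fun j => ⟨j.1, lt_of_lt_of_le j.2 hk⟩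

/-- The leading `r × c` submatrix of `M`. -/
def subUL {a b : ℕ} (M : Matrix (Fin a) (Fin b) ℝ) (r c : ℕ) (hr : r ≤ a) (hc : c ≤ b) :
    Matrix (Fin r) (Fin c) ℝ :=
  M.submatrix (fun i => ⟨i.1, lt_of_lt_of_le i.2 hr⟩) (fun j => ⟨j.1, lt_of_lt_of_le j.2 hc⟩)

namespace Interlace

noncomputable def fE {a b : ℕ} (M : Matrix (Fin a) (Fin b) ℝ) :
    EuclideanSpace ℝ (Fin b) →L[ℝ] EuclideanSpace ℝ (Fin a) :=
  LinearMap.toContinuousLinearMap (Matrix.toEuclideanLin M)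

variable {a b : ℕ}

lemma specNorm_eq (M : Matrix (Fin a) (Fin b) ℝ) : specNorm M = ‖fE M‖ := rfl

lemma fE_apply (M : Matrix (Fin a) (Fin b) ℝ) (x : EuclideanSpace ℝ (Fin b)) (i : Fin a) :
    fE M x i = ∑ j, M i j * x j := by
  simp [fE, Matrix.toEuclideanLin_apply, Matrix.mulVec, dotProduct]

lemma fE_sub (M N : Matrix (Fin a) (Fin b) ℝ) (x : EuclideanSpace ℝ (Fin b)) :
    fE (M - N) x = fE M x - fE N x := by
  simp [fE, map_sub]

lemma fE_mul {c : ℕ} (M : Matrix (Fin a) (Fin b) ℝ) (N : Matrix (Fin b) (Fin c) ℝ)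
    (x : EuclideanSpace ℝ (Fin c)) :
    fE (M * N) x = fE M (fE N x) := by
  simp only [fE, LinearMap.coe_toContinuousLinearMap']
  rw [Matrix.toEuclideanLin_eq_toLin, Matrix.toLin_mul (PiLp.basisFun 2 ℝ (Fin c))
    (PiLp.basisFun 2 ℝ (Fin b)) (PiLp.basisFun 2 ℝ (Fin a)) M N]
  rfl

lemma inner_fE (M : Matrix (Fin a) (Fin b) ℝ) (x : EuclideanSpace ℝ (Fin b))
    (y : EuclideanSpace ℝ (Fin a)) :
    ⟪fE M x, y⟫ = ⟪x, fE Mᵀ y⟫ := by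
  simp only [PiLp.inner_apply, RCLike.inner_apply, starRingEnd_apply, star_trivial,
    fE_apply, Matrix.transpose_apply]
  simp only [Finset.sum_mul, Finset.mul_sum]
  rw [Finset.sum_comm]
  apply Finset.sum_congr rfl; intros; apply Finset.sum_congr rfl; intros; ring

lemma fE_one (x : EuclideanSpace ℝ (Fin b)) : fE (1 : Matrix (Fin b) (Fin b) ℝ) x = x := by
  ext i
  simp [fE_apply, Matrix.one_apply]

lemma norm_sq_fE (M : Matrix (Fin a) (Fin b) ℝ) (x : EuclideanSpace ℝ (Fin b)) :
    ‖fE M x‖ ^ 2 = ⟪x, fE (Mᵀ * M) x⟫ := by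
  rw [← real_inner_self_eq_norm_sq, inner_fE, fE_mul]

lemma norm_fE_isometry {a' : ℕ} (U : Matrix (Fin a) (Fin a') ℝ) (hU : Uᵀ * U = 1)
    (x : EuclideanSpace ℝ (Fin a')) : ‖fE U x‖ = ‖x‖ := by
  have h : ‖fE U x‖ ^ 2 = ‖x‖ ^ 2 := by
    rw [norm_sq_fE, hU, fE_one, real_inner_self_eq_norm_sq]
  calc ‖fE U x‖ = Real.sqrt (‖fE U x‖ ^ 2) := (Real.sqrt_sq (norm_nonneg _)).symm
    _ = Real.sqrt (‖x‖ ^ 2) := by rw [h]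
    _ = ‖x‖ := Real.sqrt_sq (norm_nonneg _)

lemma specNorm_nonneg (M : Matrix (Fin a) (Fin b) ℝ) : 0 ≤ specNorm M := norm_nonneg _

lemma le_specNorm (M : Matrix (Fin a) (Fin b) ℝ) (x : EuclideanSpace ℝ (Fin b)) :
    ‖fE M x‖ ≤ specNorm M * ‖x‖ := (fE M).le_opNorm x

lemma specNorm_le_bound (M : Matrix (Fin a) (Fin b) ℝ) {C : ℝ} (h0 : 0 ≤ C)
    (h : ∀ x, ‖fE M x‖ ≤ C * ‖x‖) : specNorm M ≤ C :=
  ContinuousLinearMap.opNorm_le_bound _ h0 h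

lemma specNorm_mul_le {c : ℕ} (M : Matrix (Fin a) (Fin b) ℝ) (N : Matrix (Fin b) (Fin c) ℝ) :
    specNorm (M * N) ≤ specNorm M * specNorm N := by
  apply specNorm_le_bound _ (mul_nonneg (specNorm_nonneg M) (specNorm_nonneg N))
  intro x
  rw [fE_mul]
  calc ‖fE M (fE N x)‖ ≤ specNorm M * ‖fE N x‖ := le_specNorm M _
    _ ≤ specNorm M * (specNorm N * ‖x‖) :=
        mul_le_mul_of_nonneg_left (le_specNorm N x) (specNorm_nonneg M)
    _ = specNorm M * specNorm N * ‖x‖ := by ring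

lemma specNorm_le_one {a' : ℕ} (U : Matrix (Fin a) (Fin a') ℝ) (hU : Uᵀ * U = 1) :
    specNorm U ≤ 1 := by
  apply specNorm_le_bound _ zero_le_one
  intro x
  rw [norm_fE_isometry U hU, one_mul]

lemma specNorm_transpose_le (M : Matrix (Fin a) (Fin b) ℝ) : specNorm Mᵀ ≤ specNorm M := by
  apply specNorm_le_bound _ (specNorm_nonneg M)
  intro y
  rcases eq_or_ne (‖fE Mᵀ y‖) 0 with h0 | h0
  · rw [h0]; exact mul_nonneg (specNorm_nonneg M) (norm_nonneg _)
  have h : ‖fE Mᵀ y‖ ^ 2 = ⟪y, fE M (fE Mᵀ y)⟫ := by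
    rw [← real_inner_self_eq_norm_sq, real_inner_comm, inner_fE, Matrix.transpose_transpose]
  have h2 : ‖fE Mᵀ y‖ ^ 2 ≤ ‖y‖ * (specNorm M * ‖fE Mᵀ y‖) := by
    rw [h]
    exact (real_inner_le_norm _ _).trans
      (mul_le_mul_of_nonneg_left (le_specNorm M _) (norm_nonneg y))
  have h3 : 0 < ‖fE Mᵀ y‖ := lt_of_le_of_ne (norm_nonneg _) (Ne.symm h0)
  nlinarith

lemma specNorm_transpose (M : Matrix (Fin a) (Fin b) ℝ) : specNorm Mᵀ = specNorm M :=
  le_antisymm (specNorm_transpose_le M)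
    (by simpa using specNorm_transpose_le Mᵀ)

lemma rank_eq_finrank_range (M : Matrix (Fin a) (Fin b) ℝ) :
    M.rank = Module.finrank ℝ (LinearMap.range (Matrix.toEuclideanLin M)) := by
  rw [Matrix.rank_eq_finrank_range_toLin M (PiLp.basisFun 2 ℝ (Fin a)) (PiLp.basisFun 2 ℝ (Fin b)),
    Matrix.toEuclideanLin_eq_toLin]

/-! singVal basics -/

lemma singValSet_nonempty (M : Matrix (Fin a) (Fin b) ℝ) {j : ℕ} (hj : 1 ≤ j) :
    {r : ℝ | ∃ D : Matrix (Fin a) (Fin b) ℝ, D.rank < j ∧ r = specNorm (M - D)}.Nonempty :=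
  ⟨specNorm M, 0, by simpa [Matrix.rank_zero] using Nat.lt_of_lt_of_le Nat.zero_lt_one hj, by simp⟩

lemma singValSet_bddBelow (M : Matrix (Fin a) (Fin b) ℝ) (j : ℕ) :
    BddBelow {r : ℝ | ∃ D : Matrix (Fin a) (Fin b) ℝ, D.rank < j ∧ r = specNorm (M - D)} :=
  ⟨0, by rintro r ⟨D, _, rfl⟩; exact specNorm_nonneg _⟩

lemma singVal_le (M : Matrix (Fin a) (Fin b) ℝ) {j : ℕ} {D : Matrix (Fin a) (Fin b) ℝ}
    (hD : D.rank < j) : singVal M j ≤ specNorm (M - D) :=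
  csInf_le (singValSet_bddBelow M j) ⟨D, hD, rfl⟩

lemma le_singVal (M : Matrix (Fin a) (Fin b) ℝ) {j : ℕ} (hj : 1 ≤ j) {r : ℝ}
    (h : ∀ D : Matrix (Fin a) (Fin b) ℝ, D.rank < j → r ≤ specNorm (M - D)) :
    r ≤ singVal M j :=
  le_csInf (singValSet_nonempty M hj) (by rintro s ⟨D, hD, rfl⟩; exact h D hD)

lemma singVal_le_singVal {a' b' : ℕ} {M : Matrix (Fin a) (Fin b) ℝ}
    {N : Matrix (Fin a') (Fin b') ℝ} {j j' : ℕ} (hj : 1 ≤ j)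
    (h : ∀ D : Matrix (Fin a) (Fin b) ℝ, D.rank < j →
      ∃ D₂ : Matrix (Fin a') (Fin b') ℝ, D₂.rank < j' ∧ specNorm (N - D₂) ≤ specNorm (M - D)) :
    singVal N j' ≤ singVal M j := by
  apply le_csInf (singValSet_nonempty M hj)
  rintro s ⟨D, hD, rfl⟩
  obtain ⟨D₂, h₂, hle⟩ := h D hD
  exact (csInf_le (singValSet_bddBelow N j') ⟨D₂, h₂, rfl⟩).trans hle

lemma singVal_mul_le {a₂ b₂ : ℕ} (L : Matrix (Fin a₂) (Fin a) ℝ) (R : Matrix (Fin b) (Fin b₂) ℝ)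
    (hL : specNorm L ≤ 1) (hR : specNorm R ≤ 1) (M : Matrix (Fin a) (Fin b) ℝ) {j : ℕ}
    (hj : 1 ≤ j) : singVal (L * M * R) j ≤ singVal M j := by
  apply singVal_le_singVal hj
  intro D hD
  refine ⟨L * D * R, ?_, ?_⟩
  · exact lt_of_le_of_lt ((Matrix.rank_mul_le_left (L * D) R).trans
      (Matrix.rank_mul_le_right L D)) hD
  · have hfac : L * M * R - L * D * R = L * (M - D) * R := by
      rw [Matrix.mul_sub, Matrix.sub_mul]
    rw [hfac]
    calc specNorm (L * (M - D) * R) ≤ specNorm (L * (M - D)) * specNorm R :=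
          specNorm_mul_le _ _
      _ ≤ specNorm (L * (M - D)) * 1 :=
          mul_le_mul_of_nonneg_left hR (specNorm_nonneg _)
      _ = specNorm (L * (M - D)) := mul_one _
      _ ≤ specNorm L * specNorm (M - D) := specNorm_mul_le _ _
      _ ≤ 1 * specNorm (M - D) := mul_le_mul_of_nonneg_right hL (specNorm_nonneg _)
      _ = specNorm (M - D) := one_mul _

lemma singVal_conj_eq {a' b' : ℕ} (U : Matrix (Fin a) (Fin a') ℝ) (hU : Uᵀ * U = 1)
    (V : Matrix (Fin b) (Fin b') ℝ) (hV : Vᵀ * V = 1) (N : Matrix (Fin a') (Fin b') ℝ)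
    {j : ℕ} (hj : 1 ≤ j) : singVal (U * N * Vᵀ) j = singVal N j := by
  have hUt : specNorm Uᵀ ≤ 1 := by rw [specNorm_transpose]; exact specNorm_le_one U hU
  have hVt : specNorm Vᵀ ≤ 1 := by rw [specNorm_transpose]; exact specNorm_le_one V hV
  apply le_antisymm
  · exact singVal_mul_le U Vᵀ (specNorm_le_one U hU) hVt N hj
  · have hrec : Uᵀ * (U * N * Vᵀ) * V = N := by
      calc Uᵀ * (U * N * Vᵀ) * V = (Uᵀ * U) * N * (Vᵀ * V) := by
            simp only [Matrix.mul_assoc]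
        _ = N := by rw [hU, hV, Matrix.one_mul, Matrix.mul_one]
    conv_lhs => rw [← hrec]
    exact singVal_mul_le Uᵀ V hUt (specNorm_le_one V hV) _ hj

/-! selection matrices -/

def sel {a a' : ℕ} (f : Fin a' → Fin a) : Matrix (Fin a') (Fin a) ℝ :=
  Matrix.of fun i t => if f i = t then 1 else 0

lemma sel_mul_sel_transpose {a a' : ℕ} {f : Fin a' → Fin a} (hf : Function.Injective f) :
    sel f * (sel f)ᵀ = 1 := by
  ext i i'
  simp only [Matrix.mul_apply, sel, Matrix.of_apply, Matrix.transpose_apply, Matrix.one_apply]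
  rw [Finset.sum_eq_single (f i)]
  · simp [hf.eq_iff, eq_comm]
  · intro t _ ht; simp [Ne.symm ht]
  · simp

lemma sel_id {a : ℕ} : sel (id : Fin a → Fin a) = 1 := by
  ext i t; simp [sel, Matrix.one_apply]

lemma submatrix_eq_sel {a b a' b' : ℕ} (M : Matrix (Fin a) (Fin b) ℝ)
    (r : Fin a' → Fin a) (c : Fin b' → Fin b) :
    M.submatrix r c = sel r * M * (sel c)ᵀ := by
  ext i j'
  simp only [Matrix.submatrix_apply, Matrix.mul_apply, sel, Matrix.of_apply,
    Matrix.transpose_apply]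
  rw [Finset.sum_eq_single (c j')]
  · rw [if_pos rfl, mul_one, Finset.sum_eq_single (r i)]
    · simp
    · intro t _ ht; simp [Ne.symm ht]
    · simp
  · intro s _ hs; simp [Ne.symm hs]
  · simp

lemma specNorm_sel_le {a a' : ℕ} {f : Fin a' → Fin a} (hf : Function.Injective f) :
    specNorm (sel f) ≤ 1 := by
  have h : ((sel f)ᵀ)ᵀ * (sel f)ᵀ = 1 := by
    rw [Matrix.transpose_transpose, sel_mul_sel_transpose hf]
  calc specNorm (sel f) = specNorm ((sel f)ᵀ) := (specNorm_transpose _).symm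
    _ ≤ 1 := specNorm_le_one _ h

lemma singVal_submatrix_le {a b a' b' : ℕ} (M : Matrix (Fin a) (Fin b) ℝ)
    {r : Fin a' → Fin a} {c : Fin b' → Fin b} (hr : Function.Injective r)
    (hc : Function.Injective c) {j : ℕ} (hj : 1 ≤ j) :
    singVal (M.submatrix r c) j ≤ singVal M j := by
  rw [submatrix_eq_sel]
  exact singVal_mul_le (sel r) (sel c)ᵀ (specNorm_sel_le hr)
    (by rw [specNorm_transpose]; exact specNorm_sel_le hc) M hj

lemma rank_add_le {a b : ℕ} (X Y : Matrix (Fin a) (Fin b) ℝ) :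
    (X + Y).rank ≤ X.rank + Y.rank := by
  rw [rank_eq_finrank_range, rank_eq_finrank_range, rank_eq_finrank_range]
  have hle : LinearMap.range (Matrix.toEuclideanLin (X + Y)) ≤
      LinearMap.range (Matrix.toEuclideanLin X) ⊔ LinearMap.range (Matrix.toEuclideanLin Y) := by
    rw [map_add]
    rintro y ⟨x, rfl⟩
    exact Submodule.add_mem_sup ⟨x, rfl⟩ ⟨x, rfl⟩
  calc Module.finrank ℝ (LinearMap.range (Matrix.toEuclideanLin (X + Y)))
      ≤ Module.finrank ℝ ↥(LinearMap.range (Matrix.toEuclideanLin X) ⊔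
          LinearMap.range (Matrix.toEuclideanLin Y)) := Submodule.finrank_mono hle
    _ ≤ _ := by
        have := Submodule.finrank_sup_add_finrank_inf_eq
          (LinearMap.range (Matrix.toEuclideanLin X)) (LinearMap.range (Matrix.toEuclideanLin Y))
        omega

lemma rank_one_sub_selT_sel {b b' : ℕ} {c : Fin b' → Fin b} (hc : Function.Injective c) :
    ((1 : Matrix (Fin b) (Fin b) ℝ) - (sel c)ᵀ * sel c).rank = b - b' := by
  classical
  have hdiag : (1 : Matrix (Fin b) (Fin b) ℝ) - (sel c)ᵀ * sel c =
      Matrix.diagonal (fun t => if t ∈ Finset.image c Finset.univ then (0 : ℝ) else 1) := by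
    ext t t'
    simp only [Matrix.sub_apply, Matrix.one_apply, Matrix.mul_apply, sel, Matrix.of_apply,
      Matrix.transpose_apply, Matrix.diagonal_apply]
    rcases eq_or_ne t t' with rfl | hne
    · simp only [if_pos rfl]
      by_cases hmem : t ∈ Finset.image c Finset.univ
      · obtain ⟨i0, _, hi0⟩ := Finset.mem_image.mp hmem
        rw [Finset.sum_eq_single i0]
        · simp [hi0, hmem]
        · intro i _ hii
          have : c i ≠ t := fun h => hii (hc (h.trans hi0.symm))
          simp [this]
        · simp
      · have : ∀ i : Fin b', ¬ (c i = t) := by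
          intro i h
          exact hmem (Finset.mem_image.mpr ⟨i, Finset.mem_univ _, h⟩)
        rw [Finset.sum_eq_zero (fun i _ => by simp [this i])]
        simp [hmem]
    · rw [if_neg hne, if_neg hne]
      rw [Finset.sum_eq_zero, sub_zero]
      intro i _
      by_cases h1 : c i = t
      · have : ¬ (c i = t') := fun h2 => hne (h1 ▸ h2 ▸ rfl)
        simp [this]
      · simp [h1]
  rw [hdiag, Matrix.rank_diagonal]
  have hcard : Fintype.card {t : Fin b //
      (if t ∈ Finset.image c Finset.univ then (0:ℝ) else 1) ≠ 0} =
      Fintype.card {t : Fin b // ¬ (t ∈ Finset.image c Finset.univ)} :=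
    Fintype.card_congr (Equiv.subtypeEquivRight (fun t => by
      by_cases h : t ∈ Finset.image c Finset.univ <;> simp [h]))
  rw [hcard, Fintype.card_subtype_compl]
  congr 1
  · simp
  · rw [Fintype.card_coe, Finset.card_image_of_injective _ hc, Finset.card_univ,
      Fintype.card_fin]

lemma singVal_add_le_deleteCol {a b b' : ℕ} (c : Fin b' → Fin b) (hc : Function.Injective c)
    (M : Matrix (Fin a) (Fin b) ℝ) {j : ℕ} (hj : 1 ≤ j) :
    singVal M (j + (b - b')) ≤ singVal (M.submatrix id c) j := by
  apply singVal_le_singVal hj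
  intro D' hD'
  have hsub : M.submatrix id c = M * (sel c)ᵀ := by
    rw [submatrix_eq_sel, sel_id, Matrix.one_mul]
  refine ⟨M - (M.submatrix id c - D') * sel c, ?_, ?_⟩
  · have key : M - (M.submatrix id c - D') * sel c =
        M * (1 - (sel c)ᵀ * sel c) + D' * sel c := by
      rw [hsub, Matrix.mul_sub, Matrix.mul_one, Matrix.sub_mul, Matrix.mul_assoc]
      abel
    rw [key]
    have h1 : (M * (1 - (sel c)ᵀ * sel c)).rank ≤ b - b' := by
      calc (M * (1 - (sel c)ᵀ * sel c)).rank ≤ (1 - (sel c)ᵀ * sel c).rank :=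
            Matrix.rank_mul_le_right _ _
        _ = b - b' := rank_one_sub_selT_sel hc
    have h2 : (D' * sel c).rank ≤ D'.rank := Matrix.rank_mul_le_left _ _
    have := rank_add_le (M * (1 - (sel c)ᵀ * sel c)) (D' * sel c)
    omega
  · rw [sub_sub_cancel]
    calc specNorm ((M.submatrix id c - D') * sel c)
        ≤ specNorm (M.submatrix id c - D') * specNorm (sel c) := specNorm_mul_le _ _
      _ ≤ specNorm (M.submatrix id c - D') * 1 :=
          mul_le_mul_of_nonneg_left (specNorm_sel_le hc) (specNorm_nonneg _)
      _ = specNorm (M.submatrix id c - D') := mul_one _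

/-! Eckart-Young -/

section EY

variable {a b : ℕ}

lemma norm_sq_sum_fE (M : Matrix (Fin a) (Fin b) ℝ)
    (v : OrthonormalBasis (Fin b) ℝ (EuclideanSpace ℝ (Fin b))) (μ : Fin b → ℝ)
    (hμ : ∀ i i', ⟪fE M (v i), fE M (v i')⟫ = if i = i' then μ i else 0)
    (S : Finset (Fin b)) (cc : Fin b → ℝ) :
    ‖∑ i ∈ S, cc i • fE M (v i)‖ ^ 2 = ∑ i ∈ S, cc i ^ 2 * μ i := by
  rw [← real_inner_self_eq_norm_sq, sum_inner]
  apply Finset.sum_congr rfl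
  intro i hi
  rw [real_inner_smul_left, inner_sum]
  have h1 : ∀ i' ∈ S, ⟪fE M (v i), cc i' • fE M (v i')⟫ =
      if i = i' then cc i' * μ i else 0 := by
    intro i' _
    rw [real_inner_smul_right, hμ]
    split_ifs <;> ring_nf <;> simp
  rw [Finset.sum_congr rfl h1, Finset.sum_ite_eq S i (fun i' => cc i' * μ i), if_pos hi]
  ring

theorem singVal_eq_sqrt (M : Matrix (Fin a) (Fin b) ℝ)
    (v : OrthonormalBasis (Fin b) ℝ (EuclideanSpace ℝ (Fin b))) (μ : Fin b → ℝ)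
    (hμ : ∀ i i', ⟪fE M (v i), fE M (v i')⟫ = if i = i' then μ i else 0)
    (hmono : Antitone μ) (j : Fin b) :
    singVal M ((j : ℕ) + 1) = Real.sqrt (μ j) := by
  classical
  have hμnonneg : ∀ i, 0 ≤ μ i := fun i => by
    have h := hμ i i
    rw [if_pos rfl] at h
    rw [← h]
    exact real_inner_self_nonneg
  have hpars : ∀ x : EuclideanSpace ℝ (Fin b), ∑ i, (v.repr x i) ^ 2 = ‖x‖ ^ 2 := by
    intro x
    have h1 : ‖v.repr x‖ = ‖x‖ := v.repr.norm_map x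
    rw [← h1, EuclideanSpace.norm_eq, Real.sq_sqrt (by positivity)]
    apply Finset.sum_congr rfl
    intros; rw [Real.norm_eq_abs, sq_abs]
  have hMx : ∀ x : EuclideanSpace ℝ (Fin b),
      fE M x = ∑ i, (v.repr x i) • fE M (v i) := by
    intro x
    conv_lhs => rw [← v.sum_repr x]
    rw [map_sum]
    apply Finset.sum_congr rfl
    intros; exact (fE M).map_smul _ _
  apply le_antisymm
  · -- upper bound via truncation
    set L : EuclideanSpace ℝ (Fin b) →ₗ[ℝ] EuclideanSpace ℝ (Fin a) :=
      ∑ i ∈ Finset.Iio j,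
        LinearMap.smulRight ((innerSL ℝ (v i)) : EuclideanSpace ℝ (Fin b) →L[ℝ] ℝ).toLinearMap
          (fE M (v i)) with hLdef
    have hLapply : ∀ x, L x = ∑ i ∈ Finset.Iio j, ⟪v i, x⟫ • fE M (v i) := by
      intro x
      rw [hLdef]
      rw [LinearMap.sum_apply]
      apply Finset.sum_congr rfl
      intros i _
      rw [LinearMap.smulRight_apply]
      congr 1
    set D := Matrix.toEuclideanLin.symm L with hDdef
    have hDL : Matrix.toEuclideanLin D = L := LinearEquiv.apply_symm_apply _ _
    have hrank : D.rank < (j : ℕ) + 1 := by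
      rw [rank_eq_finrank_range, hDL]
      have hsub : LinearMap.range L ≤ Submodule.span ℝ
          ↑((Finset.Iio j).image (fun i => fE M (v i))) := by
        rintro y ⟨x, rfl⟩
        rw [hLapply]
        apply Submodule.sum_mem
        intro i hi
        exact Submodule.smul_mem _ _ (Submodule.subset_span
          (Finset.mem_coe.mpr (Finset.mem_image.mpr ⟨i, hi, rfl⟩)))
      have h2 := Submodule.finrank_mono hsub
      have h3 := finrank_span_le_card (R := ℝ)
        (↑((Finset.Iio j).image (fun i => fE M (v i))) :
          Set (EuclideanSpace ℝ (Fin a)))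
      rw [Finset.toFinset_coe] at h3
      have h4 := Finset.card_image_le (s := Finset.Iio j) (f := fun i => fE M (v i))
      rw [Fin.card_Iio] at h4
      have := h2.trans (h3.trans h4)
      omega
    have hub : specNorm (M - D) ≤ Real.sqrt (μ j) := by
      apply specNorm_le_bound _ (Real.sqrt_nonneg _)
      intro x
      have hDx : fE D x = L x := by
        show Matrix.toEuclideanLin D x = L x
        rw [hDL]
      have hx : fE (M - D) x =
          ∑ i ∈ Finset.univ \ Finset.Iio j, (v.repr x i) • fE M (v i) := by
        rw [fE_sub, hMx x, hDx, hLapply,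
          Finset.sum_sdiff_eq_sub (Finset.subset_univ _)]
        congr 1
        apply Finset.sum_congr rfl
        intros i _
        rw [v.repr_apply_apply]
      have h2 : ‖fE (M - D) x‖ ^ 2 = ∑ i ∈ Finset.univ \ Finset.Iio j,
          (v.repr x i) ^ 2 * μ i := by
        rw [hx]
        exact norm_sq_sum_fE M v μ hμ _ _
      have h3 : ‖fE (M - D) x‖ ^ 2 ≤ μ j * ‖x‖ ^ 2 := by
        rw [h2, ← hpars x]
        calc ∑ i ∈ Finset.univ \ Finset.Iio j, (v.repr x i) ^ 2 * μ i
            ≤ ∑ i ∈ Finset.univ \ Finset.Iio j, μ j * (v.repr x i) ^ 2 := by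
              apply Finset.sum_le_sum
              intro i hi
              have : j ≤ i := by
                simp only [Finset.mem_sdiff, Finset.mem_univ, Finset.mem_Iio, true_and] at hi
                exact le_of_not_gt hi
              have := hmono this
              nlinarith [sq_nonneg (v.repr x i)]
          _ ≤ ∑ i, μ j * (v.repr x i) ^ 2 := by
              apply Finset.sum_le_sum_of_subset_of_nonneg (Finset.sdiff_subset)
              intro i _ _
              exact mul_nonneg (hμnonneg j) (sq_nonneg _)
          _ = μ j * ∑ i, (v.repr x i) ^ 2 := by rw [Finset.mul_sum]
      calc ‖fE (M - D) x‖ = Real.sqrt (‖fE (M - D) x‖ ^ 2) :=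
            (Real.sqrt_sq (norm_nonneg _)).symm
        _ ≤ Real.sqrt (μ j * ‖x‖ ^ 2) := Real.sqrt_le_sqrt h3
        _ = Real.sqrt (μ j) * ‖x‖ := by
            rw [Real.sqrt_mul (hμnonneg j), Real.sqrt_sq (norm_nonneg _)]
    exact (singVal_le M hrank).trans hub
  · -- lower bound
    apply le_singVal M (by omega)
    intro D hD
    set K := LinearMap.ker (Matrix.toEuclideanLin D) with hKdef
    have hjb : (j : ℕ) < b := j.2
    have hK : (b : ℕ) - (j : ℕ) ≤ Module.finrank ℝ K := by
      rw [hKdef]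
      have h1 := LinearMap.finrank_range_add_finrank_ker (Matrix.toEuclideanLin D)
      rw [finrank_euclideanSpace_fin] at h1
      have h2 : Module.finrank ℝ (LinearMap.range (Matrix.toEuclideanLin D)) ≤ (j:ℕ) := by
        rw [← rank_eq_finrank_range]; omega
      omega
    have hg : Function.Injective (fun t : Fin ((j:ℕ)+1) =>
        (⟨(t:ℕ), by omega⟩ : Fin b)) := by
      intro t t' h
      exact Fin.ext (by simpa [Fin.ext_iff] using h)
    set W := Submodule.span ℝ (Set.range (⇑v ∘ fun t : Fin ((j:ℕ)+1) =>
      (⟨(t:ℕ), by omega⟩ : Fin b))) with hWdef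
    have hWrank : Module.finrank ℝ W = (j:ℕ) + 1 := by
      rw [hWdef, finrank_span_eq_card ((v.orthonormal.comp _ hg).linearIndependent)]
      simp
    have hsup : Module.finrank ℝ ↥(W ⊔ K) ≤ b := by
      have := Submodule.finrank_le (W ⊔ K)
      rwa [finrank_euclideanSpace_fin] at this
    have hint : 1 ≤ Module.finrank ℝ ↥(W ⊓ K) := by
      have heq := Submodule.finrank_sup_add_finrank_inf_eq W K
      omega
    have hnebot : W ⊓ K ≠ ⊥ := by
      intro h
      rw [h, finrank_bot] at hint
      omega
    obtain ⟨x, hx, hx0⟩ := (Submodule.ne_bot_iff _).mp hnebot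
    have hxW : x ∈ W := hx.1
    have hxK : x ∈ K := hx.2
    -- coefficients vanish above j
    have hcc : ∀ i : Fin b, (j:ℕ) < (i:ℕ) → v.repr x i = 0 := by
      intro i hi
      rw [v.repr_apply_apply]
      have hWker : W ≤ LinearMap.ker
          ((innerSL ℝ (v i)) : EuclideanSpace ℝ (Fin b) →L[ℝ] ℝ).toLinearMap := by
        rw [hWdef, Submodule.span_le]
        rintro y ⟨t, rfl⟩
        have hne : i ≠ (⟨(t:ℕ), by omega⟩ : Fin b) := by
          intro h
          have h2 : (i:ℕ) = (t:ℕ) := congrArg Fin.val h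
          have := t.2
          omega
        simp only [SetLike.mem_coe, LinearMap.mem_ker, ContinuousLinearMap.coe_coe,
          innerSL_apply_apply, Function.comp_apply]
        exact v.orthonormal.2 hne
      have := hWker hxW
      simpa using this
    have hnormM : μ j * ‖x‖ ^ 2 ≤ ‖fE M x‖ ^ 2 := by
      have h1 : ‖fE M x‖ ^ 2 = ∑ i, (v.repr x i) ^ 2 * μ i := by
        rw [hMx x]
        exact norm_sq_sum_fE M v μ hμ _ _
      rw [h1, ← hpars x, Finset.mul_sum]
      apply Finset.sum_le_sum
      intro i _
      rcases le_or_gt (i:ℕ) (j:ℕ) with h | h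
      · have hle : i ≤ j := by exact_mod_cast h
        have := hmono hle
        nlinarith [sq_nonneg (v.repr x i)]
      · rw [hcc i h]
        simp
    have hDx : fE D x = 0 := hxK
    have hxpos : 0 < ‖x‖ := norm_pos_iff.mpr hx0
    have hlow : Real.sqrt (μ j) * ‖x‖ ≤ ‖fE (M - D) x‖ := by
      rw [fE_sub, hDx, sub_zero]
      calc Real.sqrt (μ j) * ‖x‖ = Real.sqrt (μ j * ‖x‖ ^ 2) := by
            rw [Real.sqrt_mul (hμnonneg j), Real.sqrt_sq (norm_nonneg _)]
        _ ≤ Real.sqrt (‖fE M x‖ ^ 2) := Real.sqrt_le_sqrt hnormM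
        _ = ‖fE M x‖ := Real.sqrt_sq (norm_nonneg _)
    have hhi := le_specNorm (M - D) x
    have := hlow.trans hhi
    exact le_of_mul_le_mul_right this hxpos

theorem exists_singVal_data (M : Matrix (Fin a) (Fin b) ℝ) :
    ∃ μ : Fin b → ℝ, Antitone μ ∧ (∀ i, 0 ≤ μ i) ∧
      (∀ i : Fin b, singVal M ((i : ℕ) + 1) = Real.sqrt (μ i)) ∧
      (∀ i : Fin b, (μ i • (1 : Matrix (Fin b) (Fin b) ℝ) - Mᵀ * M).det = 0) := by
  classical
  have hS : (Mᵀ * M).IsHermitian := by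
    have h := Matrix.isHermitian_conjTranspose_mul_self M
    simpa using h
  set u := hS.eigenvectorBasis with hu
  set ev := hS.eigenvalues with hev
  have heig : ∀ t, fE (Mᵀ * M) (u t) = ev t • u t := by
    intro t
    have h := hS.mulVec_eigenvectorBasis t
    ext i
    have h2 := congrFun h i
    simpa [fE_apply, Matrix.mulVec, dotProduct] using h2
  have hinner : ∀ t t', ⟪fE M (u t), fE M (u t')⟫ = if t = t' then ev t else 0 := by
    intro t t'
    rw [inner_fE, ← fE_mul, heig t', real_inner_smul_right,
      orthonormal_iff_ite.mp u.orthonormal t t']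
    split_ifs with h
    · rw [mul_one]; rw [h]
    · rw [mul_zero]
  set g := Tuple.sort (fun i => -ev i) with hg
  have hmono' := Tuple.monotone_sort (fun i => -ev i)
  set μ := fun i => ev (g i) with hμdef
  have hAnti : Antitone μ := by
    intro i i' h
    have := hmono' h
    simp only [Function.comp_apply] at this
    simp only [hμdef]
    linarith
  set w := u.reindex g.symm with hw
  have hwi : ∀ i, w i = u (g i) := by
    intro i
    rw [hw, OrthonormalBasis.reindex_apply, Equiv.symm_symm]
  have hμw : ∀ i i', ⟪fE M (w i), fE M (w i')⟫ = if i = i' then μ i else 0 := by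
    intro i i'
    rw [hwi, hwi, hinner]
    simp only [EmbeddingLike.apply_eq_iff_eq]
    rfl
  have hnonneg : ∀ i, 0 ≤ μ i := by
    intro i
    have h := hμw i i
    rw [if_pos rfl] at h
    rw [← h]
    exact real_inner_self_nonneg
  refine ⟨μ, hAnti, hnonneg, ?_, ?_⟩
  · intro i
    exact singVal_eq_sqrt M w μ hμw hAnti i
  · intro i
    apply Matrix.exists_mulVec_eq_zero_iff.mp
    refine ⟨(WithLp.equiv 2 (Fin b → ℝ)) (u (g i)), ?_, ?_⟩
    · intro h
      apply u.orthonormal.ne_zero (g i)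
      apply (WithLp.equiv 2 (Fin b → ℝ)).injective
      simpa using h
    · have h := hS.mulVec_eigenvectorBasis (g i)
      rw [Matrix.sub_mulVec, Matrix.smul_mulVec, Matrix.one_mulVec]
      erw [h]
      exact sub_self _

end EY

/-! Bidiagonal matrices and Jacobi determinant recurrence -/

section Bidiag

def bidiag (n : ℕ) (α β : Fin n → ℝ) : Matrix (Fin (n + 1)) (Fin n) ℝ :=
  Matrix.of fun i j =>
    if (i : ℕ) = (j : ℕ) then α j else if (i : ℕ) = (j : ℕ) + 1 then β j else 0

def trunc {n : ℕ} (f : Fin (n + 1) → ℝ) : Fin n → ℝ := fun i => f i.castSucc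

lemma jacobi_apply (n : ℕ) (α β : Fin n → ℝ) (p q : Fin n) :
    ((bidiag n α β)ᵀ * bidiag n α β) p q =
      if (p : ℕ) = (q : ℕ) then α p ^ 2 + β p ^ 2
      else if (p : ℕ) + 1 = (q : ℕ) then β p * α q
      else if (q : ℕ) + 1 = (p : ℕ) then β q * α p else 0 := by
  classical
  have hpq : ((bidiag n α β)ᵀ * bidiag n α β) p q =
      ∑ r : Fin (n + 1), bidiag n α β r p * bidiag n α β r q := by
    rw [Matrix.mul_apply]
    apply Finset.sum_congr rfl
    intros
    rw [Matrix.transpose_apply]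
  rw [hpq]
  set rp : Fin (n + 1) := ⟨(p : ℕ), by omega⟩ with hrp
  set rp1 : Fin (n + 1) := ⟨(p : ℕ) + 1, by have := p.2; omega⟩ with hrp1
  have hsum : ∑ r : Fin (n + 1), bidiag n α β r p * bidiag n α β r q =
      bidiag n α β rp p * bidiag n α β rp q +
        bidiag n α β rp1 p * bidiag n α β rp1 q := by
    rw [← Finset.add_sum_erase _ _ (Finset.mem_univ rp)]
    congr 1
    rw [Finset.sum_eq_single_of_mem rp1
      (Finset.mem_erase.mpr ⟨by simp [hrp, hrp1, Fin.ext_iff], Finset.mem_univ _⟩)]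
    intro r hr hrne
    have h1 : (r : ℕ) ≠ (p : ℕ) := by
      intro h
      exact (Finset.mem_erase.mp hr).1 (Fin.ext h)
    have h2 : (r : ℕ) ≠ (p : ℕ) + 1 := by
      intro h
      exact hrne (Fin.ext h)
    simp [bidiag, h1, h2]
  rw [hsum]
  simp only [bidiag, Matrix.of_apply]
  by_cases h1 : (p : ℕ) = (q : ℕ)
  · have hq : p = q := Fin.ext h1
    subst hq
    split_ifs <;> (try (exfalso; omega)) <;> (try ring) <;> exfalso <;> simp_all
  · split_ifs <;> (try (exfalso; omega)) <;> (try ring) <;> exfalso <;> simp_all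

noncomputable def dfun (n : ℕ) (α β : Fin n → ℝ) (x : ℝ) : ℝ :=
  (x • (1 : Matrix (Fin n) (Fin n) ℝ) - (bidiag n α β)ᵀ * bidiag n α β).det

lemma dfun_zero (α β : Fin 0 → ℝ) (x : ℝ) : dfun 0 α β x = 1 := Matrix.det_fin_zero

lemma charEntry (n : ℕ) (α β : Fin n → ℝ) (x : ℝ) (p q : Fin n) :
    (x • (1 : Matrix (Fin n) (Fin n) ℝ) - (bidiag n α β)ᵀ * bidiag n α β) p q =
      if (p : ℕ) = (q : ℕ) then x - (α p ^ 2 + β p ^ 2)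
      else if (p : ℕ) + 1 = (q : ℕ) then -(β p * α q)
      else if (q : ℕ) + 1 = (p : ℕ) then -(β q * α p) else 0 := by
  rw [Matrix.sub_apply, Matrix.smul_apply, Matrix.one_apply, jacobi_apply]
  have : (p = q) ↔ ((p : ℕ) = (q : ℕ)) := ⟨fun h => h ▸ rfl, Fin.ext⟩
  rw [if_congr this rfl rfl]
  split_ifs <;> simp

lemma charMat_trunc (n : ℕ) (α β : Fin (n + 1) → ℝ) (x : ℝ) :
    (x • (1 : Matrix (Fin (n + 1)) (Fin (n + 1)) ℝ) -
        (bidiag (n + 1) α β)ᵀ * bidiag (n + 1) α β).submatrix Fin.castSucc Fin.castSucc =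
      x • (1 : Matrix (Fin n) (Fin n) ℝ) -
        (bidiag n (trunc α) (trunc β))ᵀ * bidiag n (trunc α) (trunc β) := by
  ext p q
  rw [Matrix.submatrix_apply, charEntry, charEntry]
  simp only [Fin.coe_castSucc, trunc]

lemma dfun_rec (n : ℕ) (α β : Fin (n + 2) → ℝ) (x : ℝ) :
    dfun (n + 2) α β x =
      (x - (α (Fin.last (n + 1)) ^ 2 + β (Fin.last (n + 1)) ^ 2)) *
          dfun (n + 1) (trunc α) (trunc β) x -
        (β ⟨n, by omega⟩ * α ⟨n + 1, by omega⟩) ^ 2 *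
          dfun n (trunc (trunc α)) (trunc (trunc β)) x := by
  classical
  set N := x • (1 : Matrix (Fin (n + 2)) (Fin (n + 2)) ℝ) -
    (bidiag (n + 2) α β)ᵀ * bidiag (n + 2) α β with hN
  set q0 : Fin (n + 2) := ⟨n, by omega⟩ with hq0
  have hq0v : (q0 : ℕ) = n := rfl
  have hlv : ((Fin.last (n + 1) : Fin (n + 2)) : ℕ) = n + 1 := rfl
  have hdet : dfun (n + 2) α β x = ∑ q : Fin (n + 2),
      (-1) ^ ((Fin.last (n + 1) : ℕ) + (q : ℕ)) * N (Fin.last (n + 1)) q *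
        (N.submatrix (Fin.last (n + 1)).succAbove q.succAbove).det := by
    rw [dfun, ← hN]
    exact Matrix.det_succ_row N (Fin.last (n + 1))
  rw [hdet]
  have hrow : ∀ q : Fin (n + 2), q ≠ Fin.last (n + 1) → q ≠ q0 →
      N (Fin.last (n + 1)) q = 0 := by
    intro q hq1 hq2
    have hv1 : (q : ℕ) ≠ n + 1 := fun h => hq1 (Fin.ext (by rw [h, hlv]))
    have hv2 : (q : ℕ) ≠ n := fun h => hq2 (Fin.ext (by rw [h, hq0v]))
    have hqlt := q.2
    rw [hN, charEntry]
    rw [if_neg (by rw [hlv]; omega), if_neg (by rw [hlv]; omega),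
      if_neg (by rw [hlv]; omega)]
  have hsum : ∑ q : Fin (n + 2),
      (-1) ^ ((Fin.last (n + 1) : ℕ) + (q : ℕ)) * N (Fin.last (n + 1)) q *
        (N.submatrix (Fin.last (n + 1)).succAbove q.succAbove).det =
      (-1) ^ ((Fin.last (n + 1) : ℕ) + (Fin.last (n + 1) : ℕ)) *
          N (Fin.last (n + 1)) (Fin.last (n + 1)) *
          (N.submatrix (Fin.last (n + 1)).succAbove (Fin.last (n + 1)).succAbove).det +
        (-1) ^ ((Fin.last (n + 1) : ℕ) + (q0 : ℕ)) * N (Fin.last (n + 1)) q0 *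
          (N.submatrix (Fin.last (n + 1)).succAbove q0.succAbove).det := by
    rw [← Finset.add_sum_erase _ _ (Finset.mem_univ (Fin.last (n + 1)))]
    congr 1
    rw [Finset.sum_eq_single_of_mem q0
      (Finset.mem_erase.mpr ⟨fun h => by
        have := congrArg Fin.val h
        rw [hq0v, hlv] at this
        omega, Finset.mem_univ _⟩)]
    intro q hq hqne
    rw [hrow q (Finset.mem_erase.mp hq).1 hqne, mul_zero, zero_mul]
  rw [hsum]
  -- first term
  have hsign1 : ((-1 : ℝ)) ^ ((Fin.last (n + 1) : ℕ) + (Fin.last (n + 1) : ℕ)) = 1 :=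
    Even.neg_one_pow ⟨n + 1, by rw [hlv]⟩
  have hNll : N (Fin.last (n + 1)) (Fin.last (n + 1)) =
      x - (α (Fin.last (n + 1)) ^ 2 + β (Fin.last (n + 1)) ^ 2) := by
    rw [hN, charEntry, if_pos rfl]
  have hminor1 : (N.submatrix (Fin.last (n + 1)).succAbove
      (Fin.last (n + 1)).succAbove).det = dfun (n + 1) (trunc α) (trunc β) x := by
    rw [Fin.succAbove_last, hN, charMat_trunc, dfun]
  -- second term
  have hsign2 : ((-1 : ℝ)) ^ ((Fin.last (n + 1) : ℕ) + (q0 : ℕ)) = -1 :=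
    Odd.neg_one_pow ⟨n, by rw [hlv, hq0v]; ring⟩
  have hNlq0 : N (Fin.last (n + 1)) q0 = -(β ⟨n, by omega⟩ * α ⟨n + 1, by omega⟩) := by
    rw [hN, charEntry]
    rw [if_neg (by rw [hlv, hq0v]; omega), if_neg (by rw [hlv, hq0v]; omega),
      if_pos (by rw [hlv, hq0v])]
    rfl
  have hcol : (Fin.last (n + 1)).succAbove = (Fin.castSucc : Fin (n + 1) → Fin (n + 2)) :=
    Fin.succAbove_last
  have hminor2 : (N.submatrix (Fin.last (n + 1)).succAbove q0.succAbove).det =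
      -(β ⟨n, by omega⟩ * α ⟨n + 1, by omega⟩) *
        dfun n (trunc (trunc α)) (trunc (trunc β)) x := by
    set N2 := N.submatrix (Fin.last (n + 1)).succAbove q0.succAbove with hN2
    have hdet2 : N2.det = ∑ p : Fin (n + 1),
        (-1) ^ ((p : ℕ) + (Fin.last n : ℕ)) * N2 p (Fin.last n) *
          (N2.submatrix p.succAbove (Fin.last n).succAbove).det :=
      Matrix.det_succ_column N2 (Fin.last n)
    have hq0last : q0.succAbove (Fin.last n) = Fin.last (n + 1) := by
      rw [Fin.succAbove_of_le_castSucc _ _ (by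
        rw [Fin.le_def]
        have : ((Fin.last n).castSucc : ℕ) = n := rfl
        rw [this, hq0v])]
      exact Fin.succ_last n
    have hcolval : ∀ p : Fin (n + 1), N2 p (Fin.last n) =
        if (p : ℕ) = n then -(β ⟨n, by omega⟩ * α ⟨n + 1, by omega⟩) else 0 := by
      intro p
      rw [hN2, Matrix.submatrix_apply, hcol, hq0last, hN, charEntry]
      have hp2 := p.2
      have hcv : ((p.castSucc : Fin (n + 2)) : ℕ) = (p : ℕ) := rfl
      rw [if_neg (by rw [hcv, hlv]; omega)]
      by_cases hp : (p : ℕ) = n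
      · rw [if_pos (by rw [hcv, hlv]; omega), if_pos hp]
        have hpc : (p.castSucc : Fin (n + 2)) = (⟨n, by omega⟩ : Fin (n + 2)) :=
          Fin.ext (by rw [hcv, hp])
        have hlast : (Fin.last (n + 1) : Fin (n + 2)) = (⟨n + 1, by omega⟩ : Fin (n + 2)) :=
          rfl
        rw [hpc, hlast]
      · rw [if_neg (by rw [hcv, hlv]; omega), if_neg (by rw [hcv, hlv]; omega), if_neg hp]
    have hsum2 : ∑ p : Fin (n + 1),
        (-1) ^ ((p : ℕ) + (Fin.last n : ℕ)) * N2 p (Fin.last n) *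
          (N2.submatrix p.succAbove (Fin.last n).succAbove).det =
        (-1) ^ ((Fin.last n : ℕ) + (Fin.last n : ℕ)) * N2 (Fin.last n) (Fin.last n) *
          (N2.submatrix (Fin.last n).succAbove (Fin.last n).succAbove).det := by
      apply Finset.sum_eq_single_of_mem (Fin.last n) (Finset.mem_univ _)
      intro p _ hpne
      have hpv : (p : ℕ) ≠ n := fun h => hpne (Fin.ext (by rw [h]; rfl))
      rw [hcolval p, if_neg hpv, mul_zero, zero_mul]
    rw [hdet2, hsum2]
    have hlnv : ((Fin.last n : Fin (n + 1)) : ℕ) = n := rfl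
    have hs3 : ((-1 : ℝ)) ^ ((Fin.last n : ℕ) + (Fin.last n : ℕ)) = 1 :=
      Even.neg_one_pow ⟨n, by rw [hlnv]⟩
    have hval : N2 (Fin.last n) (Fin.last n) =
        -(β ⟨n, by omega⟩ * α ⟨n + 1, by omega⟩) := by
      rw [hcolval, if_pos hlnv]
    have hminor3 : (N2.submatrix (Fin.last n).succAbove (Fin.last n).succAbove).det =
        dfun n (trunc (trunc α)) (trunc (trunc β)) x := by
      rw [Fin.succAbove_last, hN2, Matrix.submatrix_submatrix]
      have hfunr : (Fin.last (n + 1)).succAbove ∘ (Fin.castSucc : Fin n → Fin (n + 1)) =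
          (Fin.castSucc : Fin (n + 1) → Fin (n + 2)) ∘ Fin.castSucc := by
        rw [hcol]
      have hfunc : q0.succAbove ∘ (Fin.castSucc : Fin n → Fin (n + 1)) =
          (Fin.castSucc : Fin (n + 1) → Fin (n + 2)) ∘ Fin.castSucc := by
        funext t
        simp only [Function.comp_apply]
        rw [Fin.succAbove_of_castSucc_lt _ _ (by
          rw [Fin.lt_def]
          have h1 : (((t.castSucc : Fin (n + 1)).castSucc : Fin (n + 2)) : ℕ) = (t : ℕ) := rfl
          rw [h1, hq0v]
          exact t.2)]
      rw [hfunr, hfunc]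
      have hcomp : N.submatrix ((Fin.castSucc : Fin (n + 1) → Fin (n + 2)) ∘ Fin.castSucc)
          ((Fin.castSucc : Fin (n + 1) → Fin (n + 2)) ∘ Fin.castSucc) =
          (N.submatrix Fin.castSucc Fin.castSucc).submatrix Fin.castSucc Fin.castSucc := by
        rw [Matrix.submatrix_submatrix]
      rw [hcomp, hN, charMat_trunc, charMat_trunc, dfun]
    rw [hs3, hval, hminor3, one_mul]
  rw [hsign1, hNll, hminor1, hsign2, hNlq0, hminor2, one_mul]
  ring

lemma no_common_root : ∀ (n : ℕ) (α β : Fin (n + 1) → ℝ), (∀ i, α i ≠ 0) →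
    (∀ i, β i ≠ 0) → ∀ x : ℝ, dfun (n + 1) α β x = 0 →
    dfun n (trunc α) (trunc β) x = 0 → False := by
  intro n
  induction n with
  | zero =>
    intro α β hα hβ x h1 h0
    rw [dfun_zero] at h0
    exact one_ne_zero h0
  | succ m ih =>
    intro α β hα hβ x h2 h1
    have hrec := dfun_rec m α β x
    rw [h2, h1, mul_zero, zero_sub, eq_comm, neg_eq_zero] at hrec
    have hc : (β ⟨m, by omega⟩ * α ⟨m + 1, by omega⟩) ≠ 0 :=
      mul_ne_zero (hβ _) (hα _)
    have h0 : dfun m (trunc (trunc α)) (trunc (trunc β)) x = 0 :=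
      (mul_eq_zero.mp hrec).resolve_left (pow_ne_zero 2 hc)
    exact ih (trunc α) (trunc β) (fun i => hα _) (fun i => hβ _) x h1 h0

end Bidiag

/-! Final assembly -/

section Assembly

variable {n : ℕ} (α β : Fin n → ℝ)

/-- restriction of a coefficient vector -/
def restr (j : ℕ) (hj : j ≤ n) : Fin j → ℝ := fun t => α ⟨t.1, by omega⟩

noncomputable def sB (j : ℕ) (hj : j ≤ n) (i : ℕ) : ℝ :=
  singVal (bidiag j (restr α j hj) (restr β j hj)) i

lemma trunc_restr (j : ℕ) (hj : j + 1 ≤ n) :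
    trunc (restr α (j + 1) hj) = restr α j (by omega) := rfl

lemma bidiag_castSucc_sub (j : ℕ) (α' β' : Fin (j + 1) → ℝ) :
    (bidiag (j + 1) α' β').submatrix (Fin.castSucc : Fin (j + 1) → Fin (j + 2))
      (Fin.castSucc : Fin j → Fin (j + 1)) = bidiag j (trunc α') (trunc β') := by
  ext r c
  simp only [Matrix.submatrix_apply, bidiag, Matrix.of_apply, Fin.coe_castSucc, trunc]

lemma bidiag_deleteCol (j : ℕ) (α' β' : Fin (j + 1) → ℝ) :
    (bidiag (j + 1) α' β').submatrix id (Fin.castSucc : Fin j → Fin (j + 1)) =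
      (sel (Fin.castSucc : Fin (j + 1) → Fin (j + 2)))ᵀ * bidiag j (trunc α') (trunc β') := by
  ext t c
  rw [Matrix.submatrix_apply, Matrix.mul_apply]
  by_cases ht : (t : ℕ) < j + 1
  · rw [Finset.sum_eq_single (⟨(t : ℕ), ht⟩ : Fin (j + 1))]
    · have hcast : (Fin.castSucc (⟨(t : ℕ), ht⟩ : Fin (j + 1))) = t := Fin.ext rfl
      simp only [sel, Matrix.transpose_apply, Matrix.of_apply, if_pos hcast, one_mul]
      simp only [bidiag, Matrix.of_apply, Fin.coe_castSucc, trunc, id_eq]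
    · intro r _ hr
      have : ¬ (Fin.castSucc r = t) := by
        intro h
        apply hr
        apply Fin.ext
        have := congrArg Fin.val h
        simpa using this
      simp only [sel, Matrix.transpose_apply, Matrix.of_apply, if_neg this, zero_mul]
    · intro h
      exact absurd (Finset.mem_univ _) h
  · have ht1 : (t : ℕ) = j + 1 := by have := t.2; omega
    rw [Finset.sum_eq_zero]
    · have hc := c.2
      simp only [bidiag, Matrix.of_apply, Fin.coe_castSucc, id_eq]
      rw [if_neg (by omega), if_neg (by omega)]
    · intro r _
      have : ¬ (Fin.castSucc r = t) := by
        intro h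
        have := congrArg Fin.val h
        have hr2 := r.2
        simp only [Fin.coe_castSucc] at this
        omega
      simp only [sel, Matrix.transpose_apply, Matrix.of_apply, if_neg this, zero_mul]

lemma sB_weak_upper (j : ℕ) (hj : j + 1 ≤ n) (i : ℕ) (hi : 1 ≤ i) :
    sB α β j (by omega) i ≤ sB α β (j + 1) hj i := by
  have h := singVal_submatrix_le (bidiag (j + 1) (restr α (j + 1) hj) (restr β (j + 1) hj))
    (r := (Fin.castSucc : Fin (j + 1) → Fin (j + 2)))
    (c := (Fin.castSucc : Fin j → Fin (j + 1)))
    (Fin.castSucc_injective _) (Fin.castSucc_injective _) hi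
  rwa [bidiag_castSucc_sub, trunc_restr, trunc_restr] at h

lemma sB_weak_lower (j : ℕ) (hj : j + 1 ≤ n) (i : ℕ) (hi : 1 ≤ i) :
    sB α β (j + 1) hj (i + 1) ≤ sB α β j (by omega) i := by
  have h1 := singVal_add_le_deleteCol (a := j + 2) (b := j + 1)
    (Fin.castSucc : Fin j → Fin (j + 1)) (Fin.castSucc_injective _)
    (bidiag (j + 1) (restr α (j + 1) hj) (restr β (j + 1) hj)) (j := i) hi
  have he : i + (j + 1 - j) = i + 1 := by omega
  rw [he] at h1
  have h2 : singVal ((bidiag (j + 1) (restr α (j + 1) hj)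
      (restr β (j + 1) hj)).submatrix id (Fin.castSucc : Fin j → Fin (j + 1))) i =
      sB α β j (by omega) i := by
    rw [bidiag_deleteCol, trunc_restr, trunc_restr]
    have hU : ((sel (Fin.castSucc : Fin (j + 1) → Fin (j + 2)))ᵀ)ᵀ *
        (sel (Fin.castSucc : Fin (j + 1) → Fin (j + 2)))ᵀ = 1 := by
      rw [Matrix.transpose_transpose]
      exact sel_mul_sel_transpose (Fin.castSucc_injective _)
    have h3 := singVal_conj_eq (sel (Fin.castSucc : Fin (j + 1) → Fin (j + 2)))ᵀ hU
      (1 : Matrix (Fin j) (Fin j) ℝ) (by rw [Matrix.transpose_one, Matrix.one_mul])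
      (bidiag j (restr α j (by omega)) (restr β j (by omega))) hi
    rw [Matrix.transpose_one, Matrix.mul_one] at h3
    exact h3
  rw [← h2]
  exact h1

lemma sB_ne (hα : ∀ i, 0 < α i) (hβ : ∀ i, 0 < β i) (j : ℕ) (hj : j + 1 ≤ n)
    (i i' : ℕ) (hi : i < j) (hi' : i' < j + 1) :
    sB α β j (by omega) (i + 1) ≠ sB α β (j + 1) hj (i' + 1) := by
  obtain ⟨μ, hμa, hμ0, hμs, hμd⟩ :=
    exists_singVal_data (bidiag j (restr α j (by omega)) (restr β j (by omega)))
  obtain ⟨ν, hνa, hν0, hνs, hνd⟩ :=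
    exists_singVal_data (bidiag (j + 1) (restr α (j + 1) hj) (restr β (j + 1) hj))
  intro heq
  rw [sB, sB] at heq
  rw [hμs ⟨i, hi⟩, hνs ⟨i', hi'⟩] at heq
  have hxy : μ ⟨i, hi⟩ = ν ⟨i', hi'⟩ := (Real.sqrt_inj (hμ0 _) (hν0 _)).mp heq
  set x := ν ⟨i', hi'⟩ with hx
  have hd1 : dfun (j + 1) (restr α (j + 1) hj) (restr β (j + 1) hj) x = 0 := hνd _
  have hd2 : dfun j (trunc (restr α (j + 1) hj)) (trunc (restr β (j + 1) hj)) x = 0 := by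
    rw [trunc_restr, trunc_restr]
    rw [← hxy]
    exact hμd _
  exact no_common_root j (restr α (j + 1) hj) (restr β (j + 1) hj)
    (fun t => ne_of_gt (hα _)) (fun t => ne_of_gt (hβ _)) x hd1 hd2

lemma sB_consec (hα : ∀ i, 0 < α i) (hβ : ∀ i, 0 < β i) (j : ℕ) (hj : j + 1 ≤ n)
    (i : ℕ) (hi : i < j) :
    sB α β (j + 1) hj (i + 2) < sB α β j (by omega) (i + 1) ∧
      sB α β j (by omega) (i + 1) < sB α β (j + 1) hj (i + 1) := by
  constructor
  · apply lt_of_le_of_ne (sB_weak_lower α β j hj (i + 1) (by omega))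
    exact (sB_ne α β hα hβ j hj i (i + 1) hi (by omega)).symm
  · apply lt_of_le_of_ne (sB_weak_upper α β j hj (i + 1) (by omega))
    exact sB_ne α β hα hβ j hj i i hi (by omega)

lemma sB_congr {j j' : ℕ} (h : j = j') (hj : j ≤ n) (i : ℕ) :
    sB α β j hj i = sB α β j' (h ▸ hj) i := by subst h; rfl

lemma sB_chain (hα : ∀ i, 0 < α i) (hβ : ∀ i, 0 < β i) :
    ∀ t : ℕ, 1 ≤ t → ∀ j, ∀ hj : j + t ≤ n, ∀ i, i < j →
      sB α β (j + t) hj (i + 1 + t) < sB α β j (by omega) (i + 1) ∧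
        sB α β j (by omega) (i + 1) < sB α β (j + t) hj (i + 1) := by
  intro t
  induction t with
  | zero => omega
  | succ m ih =>
    intro _ j hj i hi
    rcases Nat.eq_or_lt_of_le (show 1 ≤ m + 1 by omega) with h1 | h1
    · -- m = 0
      have hm : m = 0 := by omega
      subst hm
      have := sB_consec α β hα hβ j hj i hi
      constructor
      · have he : i + 1 + 1 = i + 2 := by omega
        rw [he]
        exact this.1
      · exact this.2
    · -- m ≥ 1
      have hm : 1 ≤ m := by omega
      have hjm : j + m ≤ n := by omega
      have IH := ih hm j hjm i hi
      have hjj : (j + m) + 1 ≤ n := by omega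
      have C := sB_consec α β hα hβ (j + m) hjj (i + m) (by omega)
      constructor
      · have he1 : i + 1 + (m + 1) = (i + m) + 2 := by omega
        have he2 : j + (m + 1) = (j + m) + 1 := by omega
        rw [sB_congr α β he2 _ _, he1]
        calc sB α β ((j + m) + 1) (he2 ▸ hj) ((i + m) + 2)
            < sB α β (j + m) hjm ((i + m) + 1) := C.1
          _ = sB α β (j + m) hjm (i + 1 + m) := by
              have : (i + m) + 1 = i + 1 + m := by omega
              rw [this]
          _ < sB α β j (by omega) (i + 1) := IH.1
      · have he2 : j + (m + 1) = (j + m) + 1 := by omega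
        rw [sB_congr α β he2 _ _]
        calc sB α β j (by omega) (i + 1) < sB α β (j + m) hjm (i + 1) := IH.2
          _ < sB α β ((j + m) + 1) (he2 ▸ hj) (i + 1) := by
              have C2 := sB_consec α β hα hβ (j + m) hjj i (by omega)
              exact C2.2

end Assembly

end Interlace

/-- the singular values of `B_k` strictly interlace those of `A`:
`σ_{n-k+i} < θ_i^{(k)} < σ_i` for `1 ≤ i ≤ k`, `1 ≤ k ≤ n-1`. -/
theorem singularValues_Bk_strictly_interlace_singularValues_A
    (m n : ℕ) (hn : 2 ≤ n) (hmn : n < m)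
    (A : Matrix (Fin m) (Fin n) ℝ)
    (P : Matrix (Fin m) (Fin (n + 1)) ℝ) (hP : Pᵀ * P = 1)
    (Q : Matrix (Fin n) (Fin n) ℝ) (hQ : Qᵀ * Q = 1)
    (α : Fin n → ℝ) (hα : ∀ i, 0 < α i)
    (β : Fin n → ℝ) (hβ : ∀ i, 0 < β i)
    (B : Matrix (Fin (n + 1)) (Fin n) ℝ)
    (hB : ∀ (i : Fin (n + 1)) (j : Fin n),
      B i j = if (i : ℕ) = (j : ℕ) then α j
        else if (i : ℕ) = (j : ℕ) + 1 then β j else 0)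
    (hA : A = P * B * Qᵀ)
    (σ : Fin n → ℝ) (hσpos : ∀ i, 0 < σ i)
    (hσstrict : ∀ i j : Fin n, i < j → σ j < σ i)
    (hσ : ∀ i : Fin n, σ i = singVal A ((i : ℕ) + 1))
    (k : ℕ) (hk1 : 1 ≤ k) (hk2 : k ≤ n - 1) :
    ∀ i : Fin k,
      σ ⟨n - k + (i : ℕ), by have := i.2; omega⟩ <
          singVal (subUL B (k + 1) k (by omega) (by omega)) ((i : ℕ) + 1) ∧
        singVal (subUL B (k + 1) k (by omega) (by omega)) ((i : ℕ) + 1) <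
          σ ⟨(i : ℕ), by have := i.2; omega⟩ := by
  intro i
  have hkn : k ≤ n := by omega
  have hone : (1 : ℕ) ≤ n - k := by omega
  have hAB : ∀ t : ℕ, 1 ≤ t → singVal A t = singVal B t := by
    intro t ht
    rw [hA]
    exact Interlace.singVal_conj_eq P hP Q hQ B ht
  have hBeq : B = Interlace.bidiag n α β := by
    ext r c
    rw [hB]
    rfl
  have hrα : Interlace.restr α n le_rfl = α := funext fun t => congrArg α (Fin.ext rfl)
  have hrβ : Interlace.restr β n le_rfl = β := funext fun t => congrArg β (Fin.ext rfl)
  have hsBn : ∀ t : ℕ, Interlace.sB α β n le_rfl t = singVal B t := by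
    intro t
    rw [Interlace.sB, hrα, hrβ, ← hBeq]
  have hsub : subUL B (k + 1) k (by omega) (by omega) =
      Interlace.bidiag k (Interlace.restr α k hkn) (Interlace.restr β k hkn) := by
    ext p q
    show B _ _ = _
    rw [hB]
    rfl
  have hsubS : singVal (subUL B (k + 1) k (by omega) (by omega)) ((i : ℕ) + 1) =
      Interlace.sB α β k hkn ((i : ℕ) + 1) := by
    rw [Interlace.sB, hsub]
  have hj' : k + (n - k) ≤ n := by omega
  obtain ⟨h1, h2⟩ := Interlace.sB_chain α β hα hβ (n - k) hone k hj' i.1 i.2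
  constructor
  · have e1 : Interlace.sB α β (k + (n - k)) hj' ((i : ℕ) + 1 + (n - k)) =
        Interlace.sB α β n le_rfl (n - k + (i : ℕ) + 1) := by
      have h' : (i : ℕ) + 1 + (n - k) = n - k + (i : ℕ) + 1 := by omega
      rw [h']
      exact Interlace.sB_congr α β (by omega) hj' _
    rw [e1, hsBn] at h1
    have hσv : σ ⟨n - k + (i : ℕ), by have := i.2; omega⟩ = singVal B (n - k + (i : ℕ) + 1) := by
      rw [hσ]
      exact hAB _ (by omega)
    rw [hσv, hsubS]
    exact h1
  · have e2 : Interlace.sB α β (k + (n - k)) hj' ((i : ℕ) + 1) =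
        Interlace.sB α β n le_rfl ((i : ℕ) + 1) :=
      Interlace.sB_congr α β (by omega) hj' _
    rw [e2, hsBn] at h2
    have hσv : σ ⟨(i : ℕ), by have := i.2; omega⟩ = singVal B ((i : ℕ) + 1) := by
      rw [hσ]
      exact hAB _ (by omega)
    rw [hσv, hsubS]
    exact h2
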